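/- Let g ∈ ℝᵈ with ‖g‖₂ ≤ 1. Then −Xᵀy + ε‖y‖₁·g is a subgradient of L₂(w) = (1/2)‖Xw − y‖₂² + ε‖w‖₂‖Xw − y‖₁ + (ε²n/2)‖w‖₂² at w = 0; i.e. for all w' ∈ ℝᵈ, ⟨−Xᵀy + ε‖y‖₁ g, w'⟩ ≤ L₂(w') − L₂(0). -/

import Mathlib

open Finset

/-- The L₂-adversarial training objective for least-squares linear regression. -/
noncomputable def advLoss {n d : ℕ} (X : Matrix (Fin n) (Fin d) ℝ)
    (y : Fin n → ℝ) (ε : ℝ) (w : EuclideanSpace ℝ (Fin d)) : ℝ :=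
  (1 / 2) * ∑ i, (X.mulVec w i - y i) ^ 2 +
    ε * ‖w‖ * ∑ i, |X.mulVec w i - y i| +
    ε ^ 2 * n / 2 * ‖w‖ ^ 2

/-- For any g with ‖g‖₂ ≤ 1, the vector −Xᵀy + ε‖y‖₁·g is a subgradient of L₂
at w = 0. -/
theorem stmt_18 {n d : ℕ} (X : Matrix (Fin n) (Fin d) ℝ) (y : Fin n → ℝ)
    (ε : ℝ) (hε : 0 < ε) (g : EuclideanSpace ℝ (Fin d)) (hg : ‖g‖ ≤ 1) :
    ∀ w' : EuclideanSpace ℝ (Fin d),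
      ∑ j, (-(∑ i, X i j * y i) + ε * (∑ i, |y i|) * g j) * w' j
        ≤ advLoss X y ε w' - advLoss X y ε 0 := by
  intro w'
  set v : Fin n → ℝ := X.mulVec w' with hv
  set r : ℝ := ‖w'‖ with hr
  have hr0 : 0 ≤ r := norm_nonneg _
  have hL0 : advLoss X y ε 0 = (1 / 2) * ∑ i, (y i) ^ 2 := by
    have h0 : X.mulVec (0 : EuclideanSpace ℝ (Fin d)) = 0 := Matrix.mulVec_zero X
    simp [advLoss, h0]
  -- inner product bound
  have hinner : ∑ j, g j * w' j ≤ r := by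
    have h1 : ∑ j, g j * w' j = inner ℝ g w' := by
      rw [PiLp.inner_apply]
      simp [RCLike.inner_apply, mul_comm]
    have h2 : (inner ℝ g w' : ℝ) ≤ ‖g‖ * ‖w'‖ := real_inner_le_norm g w'
    have h3 : ‖g‖ * ‖w'‖ ≤ 1 * ‖w'‖ := mul_le_mul_of_nonneg_right hg (norm_nonneg _)
    rw [h1]; linarith
  -- pointwise bound
  have hpt : ∀ i, ε * r * |y i| ≤ (1/2) * (v i)^2 + ε * r * |v i - y i| + ε^2 * r^2 / 2 := by
    intro i
    have ht : |y i| ≤ |v i - y i| + |v i| := by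
      have := abs_sub (v i) (v i - y i)
      have h' : |y i| = |v i - (v i - y i)| := by ring_nf
      calc |y i| = |v i - (v i - y i)| := by ring_nf
        _ ≤ |v i| + |v i - y i| := abs_sub _ _
        _ = |v i - y i| + |v i| := by ring
    have hεr : 0 ≤ ε * r := mul_nonneg hε.le hr0
    nlinarith [sq_nonneg (|v i| - ε * r), sq_abs (v i), abs_nonneg (v i - y i),
      mul_le_mul_of_nonneg_left ht hεr]
  have hsum : ε * r * ∑ i, |y i| ≤
      (1/2) * ∑ i, (v i)^2 + ε * r * ∑ i, |v i - y i| + ε^2 * n / 2 * r^2 := by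
    calc ε * r * ∑ i, |y i| = ∑ i, ε * r * |y i| := by rw [Finset.mul_sum]
      _ ≤ ∑ i, ((1/2) * (v i)^2 + ε * r * |v i - y i| + ε^2 * r^2 / 2) :=
          Finset.sum_le_sum fun i _ => hpt i
      _ = (1/2) * ∑ i, (v i)^2 + ε * r * ∑ i, |v i - y i| + ε^2 * n / 2 * r^2 := by
          rw [Finset.sum_add_distrib, Finset.sum_add_distrib, ← Finset.mul_sum,
            ← Finset.mul_sum, Finset.sum_const, Finset.card_univ, Fintype.card_fin]
          ring
  -- rewrite LHS
  have hswap : ∑ j, (∑ i, X i j * y i) * w' j = ∑ i, y i * v i := by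
    simp only [Finset.sum_mul, hv, Matrix.mulVec, dotProduct]
    rw [Finset.sum_comm]
    refine Finset.sum_congr rfl fun i _ => ?_
    rw [Finset.mul_sum]
    exact Finset.sum_congr rfl fun j _ => by ring
  have hLHS : ∑ j, (-(∑ i, X i j * y i) + ε * (∑ i, |y i|) * g j) * w' j
      = -(∑ i, y i * v i) + ε * (∑ i, |y i|) * ∑ j, g j * w' j := by
    have hj : ∀ j, (-(∑ i, X i j * y i) + ε * (∑ i, |y i|) * g j) * w' j
        = -((∑ i, X i j * y i) * w' j) + ε * (∑ i, |y i|) * (g j * w' j) := fun j => by ring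
    rw [Finset.sum_congr rfl fun j _ => hj j, Finset.sum_add_distrib, ← Finset.mul_sum,
      Finset.sum_neg_distrib, hswap]
  have hexp : ∑ i, (v i - y i)^2 = ∑ i, (v i)^2 - 2 * ∑ i, y i * v i + ∑ i, (y i)^2 := by
    rw [Finset.sum_congr rfl fun i _ => show (v i - y i)^2 = (v i)^2 - 2*(y i * v i) + (y i)^2 from by ring,
      Finset.sum_add_distrib, Finset.sum_sub_distrib, ← Finset.mul_sum]
  have hys : 0 ≤ ∑ i, |y i| := Finset.sum_nonneg fun i _ => abs_nonneg _
  have hinner' : ε * (∑ i, |y i|) * ∑ j, g j * w' j ≤ ε * r * ∑ i, |y i| := by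
    have := mul_le_mul_of_nonneg_left hinner (mul_nonneg hε.le hys)
    linarith [this]
  rw [hLHS, hL0]
  simp only [advLoss, ← hv, ← hr]
  rw [hexp]
  nlinarith [hsum, hinner']
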